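/- The merge capacity-loss Δ(a₁,b₁;a₂,b₂) is monotonically non-decreasing when the first pair is scaled up along a fixed likelihood ratio: if (a₃,b₃) has the same likelihood ratio a₃/b₃ = a₁/b₁ with a₃,b₃ ≥ 0, then Δ(a₁+a₃, b₁+b₃; a₂,b₂) ≥ Δ(a₁,b₁; a₂,b₂). -/

import Mathlib

/-- Capacity contribution of a probability pair `(a,b)`; `Real.logb 2 0 = 0`
implements the convention `0·log₂0 = 0`. -/
noncomputable def Cpair (a b : ℝ) : ℝ :=
  -(a + b) * Real.logb 2 (a + b) + a * Real.logb 2 a + b * Real.logb 2 b + (a + b)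

/-- Capacity loss of a degrading merge of two probability pairs. -/
noncomputable def deltaMerge (a₁ b₁ a₂ b₂ : ℝ) : ℝ :=
  Cpair a₁ b₁ + Cpair a₂ b₂ - Cpair (a₁ + a₂) (b₁ + b₂)

/-- Log-form entropy part of `Cpair`. -/
noncomputable def Epart (a b : ℝ) : ℝ :=
  a * Real.log a + b * Real.log b - (a + b) * Real.log (a + b)

lemma Cpair_eq (a b : ℝ) : Cpair a b = Epart a b / Real.log 2 + (a + b) := by
  unfold Cpair Epart Real.logb; ring

lemma deltaMerge_eq (a b c d : ℝ) :
    deltaMerge a b c d = (Epart a b + Epart c d - Epart (a + c) (b + d)) / Real.log 2 := by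
  unfold deltaMerge
  rw [Cpair_eq, Cpair_eq, Cpair_eq]; ring

lemma mul_log_mul (c x : ℝ) (hc : 0 < c) (hx : 0 ≤ x) :
    (c * x) * Real.log (c * x) = (c * x) * Real.log c + c * (x * Real.log x) := by
  rcases hx.eq_or_lt with h | h
  · simp [← h]
  · rw [Real.log_mul hc.ne' h.ne']; ring

lemma Epart_smul (c a b : ℝ) (hc : 0 ≤ c) (ha : 0 ≤ a) (hb : 0 ≤ b) :
    Epart (c * a) (c * b) = c * Epart a b := by
  rcases hc.eq_or_lt with h | h
  · simp [← h, Epart]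
  · unfold Epart
    have h1 := mul_log_mul c a h ha
    have h2 := mul_log_mul c b h hb
    have h3 := mul_log_mul c (a + b) h (by linarith)
    have e : c * a + c * b = c * (a + b) := by ring
    rw [e, h1, h2, h3]; ring

lemma sub_le_mul_log (u v : ℝ) (hu : 0 < u) (hv : 0 < v) :
    u - v ≤ u * Real.log (u / v) := by
  have h := Real.log_le_sub_one_of_pos (show 0 < v / u by positivity)
  have e : Real.log (u / v) = -Real.log (v / u) := by
    rw [← Real.log_inv]; congr 1; field_simp
  have h2 : u * Real.log (v / u) ≤ v - u := by
    calc u * Real.log (v / u) ≤ u * (v / u - 1) :=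
          mul_le_mul_of_nonneg_left h hu.le
      _ = v - u := by field_simp
  rw [e]; linarith

/-- Two-point log-sum inequality. -/
lemma logsum (x y s t : ℝ) (hx : 0 ≤ x) (hy : 0 ≤ y) (hs : 0 < s) (ht : 0 < t) :
    (x + y) * Real.log (x + y) + x * Real.log s + y * Real.log t
      ≤ x * Real.log x + y * Real.log y + (x + y) * Real.log (s + t) := by
  rcases hx.eq_or_lt with h | hxpos
  · simp only [← h, zero_add, zero_mul, add_zero]
    have := mul_le_mul_of_nonneg_left (Real.log_le_log ht (by linarith : t ≤ s + t)) hy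
    linarith
  rcases hy.eq_or_lt with h | hypos
  · simp only [← h, add_zero, zero_mul]
    have := mul_le_mul_of_nonneg_left (Real.log_le_log hs (by linarith : s ≤ s + t)) hx
    linarith
  · have hr : 0 < (x + y) / (s + t) := by positivity
    have h1 := sub_le_mul_log x (s * ((x + y) / (s + t))) hxpos (by positivity)
    have h2 := sub_le_mul_log y (t * ((x + y) / (s + t))) hypos (by positivity)
    have e1 : Real.log (x / (s * ((x + y) / (s + t)))) =
        Real.log x - Real.log s - (Real.log (x + y) - Real.log (s + t)) := by
      rw [Real.log_div hxpos.ne' (by positivity), Real.log_mul hs.ne' hr.ne',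
        Real.log_div (by positivity) (by positivity)]
      ring
    have e2 : Real.log (y / (t * ((x + y) / (s + t)))) =
        Real.log y - Real.log t - (Real.log (x + y) - Real.log (s + t)) := by
      rw [Real.log_div hypos.ne' (by positivity), Real.log_mul ht.ne' hr.ne',
        Real.log_div (by positivity) (by positivity)]
      ring
    have hsum : s * ((x + y) / (s + t)) + t * ((x + y) / (s + t)) = x + y := by
      field_simp
    rw [e1] at h1; rw [e2] at h2
    nlinarith [h1, h2, hsum]

/-- Superadditivity of `Epart` (i.e. `deltaMerge ≥ 0`), log form. -/
lemma Epart_super (a b c d : ℝ) (ha : 0 ≤ a) (hb : 0 ≤ b) (hc : 0 ≤ c) (hd : 0 ≤ d)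
    (h1 : 0 < a + b) (h2 : 0 < c + d) :
    Epart (a + c) (b + d) ≤ Epart a b + Epart c d := by
  have H1 := logsum a c (a + b) (c + d) ha hc h1 h2
  have H2 := logsum b d (a + b) (c + d) hb hd h1 h2
  unfold Epart
  have e : (a + c) + (b + d) = (a + b) + (c + d) := by ring
  rw [e]
  nlinarith [H1, H2]

/-- the merge capacity-loss is monotone when the first pair is
grown along the same likelihood ratio (`a₃ b₁ = a₁ b₃`). -/
theorem deltaMerge_mono_same_LR (a₁ b₁ a₂ b₂ a₃ b₃ : ℝ)
    (ha₁ : 0 ≤ a₁) (hb₁ : 0 ≤ b₁) (ha₂ : 0 ≤ a₂) (hb₂ : 0 ≤ b₂)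
    (ha₃ : 0 ≤ a₃) (hb₃ : 0 ≤ b₃)
    (h₁ : 0 < a₁ + b₁) (h₂ : 0 < a₂ + b₂)
    (hLR : a₃ * b₁ = a₁ * b₃) :
    deltaMerge (a₁ + a₃) (b₁ + b₃) a₂ b₂ ≥ deltaMerge a₁ b₁ a₂ b₂ := by
  rcases eq_or_lt_of_le (by positivity : (0:ℝ) ≤ a₃ + b₃) with h₃ | h₃
  · have hA : a₃ = 0 := by linarith
    have hB : b₃ = 0 := by linarith
    rw [hA, hB, add_zero, add_zero]
  · set lam : ℝ := (a₃ + b₃) / (a₁ + b₁) with hlam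
    have hlam0 : 0 ≤ lam := by positivity
    have ea3 : a₃ = lam * a₁ := by
      rw [hlam]; field_simp; nlinarith [hLR]
    have eb3 : b₃ = lam * b₁ := by
      rw [hlam]; field_simp; nlinarith [hLR]
    have E13 : Epart (a₁ + a₃) (b₁ + b₃) = Epart a₁ b₁ + Epart a₃ b₃ := by
      rw [ea3, eb3]
      have e1 : a₁ + lam * a₁ = (1 + lam) * a₁ := by ring
      have e2 : b₁ + lam * b₁ = (1 + lam) * b₁ := by ring
      rw [e1, e2, Epart_smul (1 + lam) a₁ b₁ (by linarith) ha₁ hb₁,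
        Epart_smul lam a₁ b₁ hlam0 ha₁ hb₁]
      ring
    have key : Epart (a₃ + (a₁ + a₂)) (b₃ + (b₁ + b₂)) ≤
        Epart a₃ b₃ + Epart (a₁ + a₂) (b₁ + b₂) :=
      Epart_super a₃ b₃ (a₁ + a₂) (b₁ + b₂) ha₃ hb₃ (by positivity) (by positivity)
        h₃ (by linarith)
    rw [ge_iff_le, deltaMerge_eq, deltaMerge_eq]
    have hlog2 : (0:ℝ) < Real.log 2 := Real.log_pos (by norm_num)
    have eargs : a₁ + a₃ + a₂ = a₃ + (a₁ + a₂) := by ring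
    have eargs' : b₁ + b₃ + b₂ = b₃ + (b₁ + b₂) := by ring
    rw [eargs, eargs', E13]
    gcongr (?_ / _)
    linarith [key]
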